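/- For every positive weight vector w and value function v, the weighted player potential function is unique: if Q^w satisfies Q^w(∅,v)=0 and Σ_{i∈N(g)} w_i (Q^w(g,v) − Q^w(g\g_i,v)) = v(g) for all g, then Q^w is uniquely determined, via the recursion Q^w(g,v) = (1/Σ_{i∈N(g)} w_i) [ v(g) + Σ_{i∈N(g)} w_i Q^w(g\g_i, v) ]. -/
import Mathlib


open Finset

variable {n : ℕ}

/-- A network on player set `Fin n`: a finite set of (unordered) links. -/
abbrev Network (n : ℕ) := Finset (Sym2 (Fin n))

/-- The set of non-isolated players of a network. -/
def players (g : Network n) : Finset (Fin n) :=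
  Finset.univ.filter (fun i => ∃ e ∈ g, i ∈ e)

/-- Harsanyi dividend of a value function at a network. -/
noncomputable def dividend (v : Network n → ℝ) (g' : Network n) : ℝ :=
  ∑ g'' ∈ g'.powerset, (-1 : ℝ) ^ (g'.card - g''.card) * v g''

/-- The weighted Myerson value. -/
noncomputable def wMV (w : Fin n → ℝ) (v : Network n → ℝ) (g : Network n) (i : Fin n) : ℝ :=
  ∑ g' ∈ g.powerset.filter (fun g' => i ∈ players g'),
    (w i / ∑ j ∈ players g', w j) * dividend v g'

/-- Connectivity of two players through links of `g`. -/
def connectedIn (g : Network n) (i j : Fin n) : Prop :=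
  Relation.ReflTransGen (fun a b => s(a, b) ∈ g) i j

open Classical in
/-- The component of `g` containing the link `e`. -/
noncomputable def component (g : Network n) (e : Sym2 (Fin n)) : Network n :=
  g.filter (fun e' => ∃ i ∈ e, ∃ j ∈ e', connectedIn g i j)

/-- The set of components (maximal connected subnetworks) of `g`. -/
noncomputable def components (g : Network n) : Finset (Network n) :=
  g.image (component g)

/-- Component additive value functions. -/
def componentAdditive (v : Network n → ℝ) : Prop :=
  ∀ g : Network n, v g = ∑ h ∈ components g, v h

open Classical in
/-- The restriction `g|_S` of a network to a coalition `S`. -/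
noncomputable def restrict (g : Network n) (S : Finset (Fin n)) : Network n :=
  g.filter (fun e => ∀ i ∈ e, i ∈ S)

/-- The set `g_i` of links of player `i` in `g`. -/
def glinks (g : Network n) (i : Fin n) : Network n :=
  g.filter (fun e => i ∈ e)

lemma players_nonempty {n : ℕ} (g : Network n) (hg : g ≠ ∅) : (players g).Nonempty := by
  obtain ⟨e, he⟩ := Finset.nonempty_iff_ne_empty.mpr hg
  refine ⟨e.out.1, ?_⟩
  simp only [players, Finset.mem_filter, Finset.mem_univ, true_and]
  exact ⟨e, he, Sym2.out_fst_mem e⟩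

lemma wsum_pos {n : ℕ} (w : Fin n → ℝ) (hw : ∀ k, 0 < w k) (g : Network n) (hg : g ≠ ∅) :
    0 < ∑ i ∈ players g, w i :=
  Finset.sum_pos (fun i _ => hw i) (players_nonempty g hg)

lemma card_lt {n : ℕ} (g : Network n) (i : Fin n) (hi : i ∈ players g) :
    (g \ glinks g i).card < g.card := by
  simp only [players, Finset.mem_filter, Finset.mem_univ, true_and] at hi
  obtain ⟨e, he, hie⟩ := hi
  apply Finset.card_lt_card
  refine ⟨Finset.sdiff_subset, fun h => ?_⟩
  have := h he
  simp [glinks, he, hie] at this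

lemma rec_of_pot {n : ℕ} (w : Fin n → ℝ) (hw : ∀ k, 0 < w k) (v : Network n → ℝ)
    (Q : Network n → ℝ)
    (hQ : ∀ g : Network n,
      ∑ i ∈ players g, w i * (Q g - Q (g \ glinks g i)) = v g)
    (g : Network n) (hg : g ≠ ∅) :
    Q g = (1 / ∑ i ∈ players g, w i) *
        (v g + ∑ i ∈ players g, w i * Q (g \ glinks g i)) := by
  have hS := wsum_pos w hw g hg
  have h := hQ g
  have h2 : (∑ i ∈ players g, w i) * Q g
      = v g + ∑ i ∈ players g, w i * Q (g \ glinks g i) := by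
    rw [← h]
    simp [mul_sub, Finset.sum_sub_distrib, Finset.sum_mul]
  field_simp
  linarith [h2]

/-- The weighted player potential function is unique, via the recursion
`Q(g) = (1/Σ w_i)(v(g) + Σ w_i Q(g∖g_i))`. -/
theorem potential_unique (w : Fin n → ℝ) (hw : ∀ k, 0 < w k)
    (v : Network n → ℝ) (hv : v ∅ = 0)
    (Q : Network n → ℝ) (hQ0 : Q ∅ = 0)
    (hQ : ∀ g : Network n,
      ∑ i ∈ players g, w i * (Q g - Q (g \ glinks g i)) = v g) :
    (∀ g : Network n, g ≠ ∅ →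
      Q g = (1 / ∑ i ∈ players g, w i) *
        (v g + ∑ i ∈ players g, w i * Q (g \ glinks g i))) ∧
    (∀ Q' : Network n → ℝ, Q' ∅ = 0 →
      (∀ g : Network n,
        ∑ i ∈ players g, w i * (Q' g - Q' (g \ glinks g i)) = v g) →
      Q' = Q) := by
  refine ⟨fun g hg => rec_of_pot w hw v Q hQ g hg, fun Q' hQ'0 hQ' => ?_⟩
  funext g
  induction g using Finset.strongInduction with
  | _ g ih =>
    by_cases hg : g = ∅
    · rw [hg, hQ'0, hQ0]
    · rw [rec_of_pot w hw v Q hQ g hg, rec_of_pot w hw v Q' hQ' g hg]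
      congr 1
      congr 1
      apply Finset.sum_congr rfl
      intro i hi
      have hsub : g \ glinks g i ⊂ g := by
        refine Finset.ssubset_iff_of_subset Finset.sdiff_subset |>.mpr ?_
        simp only [players, Finset.mem_filter, Finset.mem_univ, true_and] at hi
        obtain ⟨e, he, hie⟩ := hi
        exact ⟨e, he, by simp [glinks, he, hie]⟩
      rw [ih _ hsub]
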